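/- arXiv:1707.07730 — 2 statements merged into one kernel-verified Lean document; each statement's English description precedes it below -/
import Mathlib

section
/- Let (d_i)_{i≥1} be a sequence over a finite alphabet A = {0,1,…,d} ⊆ ℕ such that for every k ≥ 1, (d_i)_{i≥1} ≺ (d_{k+i})_{i≥1} strictly in the alternate order (i.e. (d_i) is strictly smaller than all of its proper shifts). Then (d_i)_{i≥1} ⪯ φ^∞(1). In other words, φ^∞(1) is the greatest non-periodic alternate Lyndon word with respect to the alternate order. -/
open Filter Topology

/-- Alternate (Ito–Sadahiro) strict order on infinite sequences (0-indexed: entry `i`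
is the `(i+1)`-th letter `x_{i+1}` of the paper). `altLt x y` iff at the first index
where they differ the comparison alternates with the parity of the index:
`(-1)^k (x_k - y_k) < 0` in 1-based indexing. -/
def altLt (x y : ℕ → ℕ) : Prop :=
  ∃ k : ℕ, (∀ i < k, x i = y i) ∧ (if Even k then y k < x k else x k < y k)

def altLe (x y : ℕ → ℕ) : Prop := x = y ∨ altLt x y

def shiftSeq (x : ℕ → ℕ) (k : ℕ) : ℕ → ℕ := fun i => x (k + i)

/-- An alternate Lyndon word: smaller (in the alternate order) than all of its shifts. -/
def IsAltLyndon (d : ℕ → ℕ) : Prop := ∀ k : ℕ, altLe d (shiftSeq d k)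

/-- The Lyndon system associated to `d`: sequences over the alphabet `{0, …, d_1}`
all of whose shifts dominate `d` in the alternate order. -/
def LyndonSystem (d : ℕ → ℕ) : Set (ℕ → ℕ) :=
  {x | (∀ i, x i ≤ d 0) ∧ ∀ k : ℕ, altLe d (shiftSeq x k)}

def IsFactorOf (w : List ℕ) (x : ℕ → ℕ) : Prop :=
  ∃ k : ℕ, w = (List.range w.length).map (fun i => x (k + i))

/-- The language of the Lyndon system: finite factors of its elements. -/
def LyndonLang (d : ℕ → ℕ) : Set (List ℕ) :=
  {w | ∃ x ∈ LyndonSystem d, IsFactorOf w x}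

/-- `Hword d n` is the number of words of length `n` in the language `L_M`. -/
noncomputable def Hword (d : ℕ → ℕ) (n : ℕ) : ℕ :=
  Set.ncard {w : List ℕ | w ∈ LyndonLang d ∧ w.length = n}

/-- The topological entropy of the Lyndon system of `d` equals `h`,
i.e. `lim_{n→∞} (log H_n)/n = h`. -/
def EntropyIs (d : ℕ → ℕ) (h : ℝ) : Prop :=
  Filter.Tendsto (fun n : ℕ => Real.log (Hword d n) / n) Filter.atTop (nhds h)

/-- The substitution `φ` on letters: `φ(0) = 1`, `φ(1) = 100`. -/
def phiL (a : ℕ) : List ℕ := if a = 0 then [1] else [1, 0, 0]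
/-- `φ` extended to words. -/
def phiW (w : List ℕ) : List ℕ := w.flatMap phiL
/-- `uW n = φ^n(1)`. -/
def uW (n : ℕ) : List ℕ := phiW^[n] [1]
/-- The infinite fixed point `φ^∞(1)` (each `uW n` is a prefix of `uW (n+1)`,
and `|uW (i+1)| > i`, so the definition below gives the limit word). -/
def phiInf : ℕ → ℕ := fun i => (uW (i + 1)).getD i 0

lemma altLt_irrefl (x : ℕ → ℕ) : ¬ altLt x x := by
  rintro ⟨k, -, hc⟩
  split at hc <;> exact lt_irrefl _ hc

lemma altLt_witness_unique {x y : ℕ → ℕ} {k k' : ℕ}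
    (h1 : ∀ i < k, x i = y i) (h2 : if Even k then y k < x k else x k < y k)
    (h1' : ∀ i < k', x i = y i) (h2' : if Even k' then y k' < x k' else x k' < y k') :
    k = k' := by
  rcases lt_trichotomy k k' with hl | he | hl
  · exfalso; have := h1' k hl; split at h2 <;> omega
  · exact he
  · exfalso; have := h1 k' hl; split at h2' <;> omega

lemma altLt_asymm {x y : ℕ → ℕ} (h : altLt x y) (h' : altLt y x) : False := by
  obtain ⟨k, hk1, hk2⟩ := h
  obtain ⟨k', hk1', hk2'⟩ := h'
  rcases lt_trichotomy k k' with hl | he | hl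
  · have := hk1' k hl; split at hk2 <;> omega
  · subst he
    rcases Nat.even_or_odd k with he | ho
    · rw [if_pos he] at hk2 hk2'; omega
    · rw [if_neg (by simpa using ho)] at hk2 hk2'; omega
  · have := hk1 k' hl; split at hk2' <;> omega

lemma alt_trichotomy (x y : ℕ → ℕ) : x = y ∨ altLt x y ∨ altLt y x := by
  by_cases hxy : x = y
  · exact Or.inl hxy
  · right
    have hex : ∃ n, x n ≠ y n := by
      by_contra hc; push_neg at hc; exact hxy (funext hc)
    classical
    have hne : x (Nat.find hex) ≠ y (Nat.find hex) := Nat.find_spec hex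
    have heq : ∀ i < Nat.find hex, x i = y i := by
      intro i hi
      by_contra hc
      have := Nat.find_min' hex hc
      omega
    set k := Nat.find hex
    rcases Nat.lt_or_ge (x k) (y k) with hlt | hge
    · rcases Nat.even_or_odd k with he | ho
      · right; exact ⟨k, fun i hi => (heq i hi).symm, by rw [if_pos he]; exact hlt⟩
      · left; exact ⟨k, heq, by rw [if_neg (by simpa using ho)]; exact hlt⟩
    · have hlt : y k < x k := by omega
      rcases Nat.even_or_odd k with he | ho
      · left; exact ⟨k, heq, by rw [if_pos he]; exact hlt⟩
      · right; exact ⟨k, fun i hi => (heq i hi).symm, by rw [if_neg (by simpa using ho)]; exact hlt⟩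



def blen (a : ℕ) : ℕ := (phiL a).length

def bpos (e : ℕ → ℕ) : ℕ → ℕ
  | 0 => 0
  | m+1 => bpos e m + blen (e m)

def bidx (e : ℕ → ℕ) : ℕ → ℕ × ℕ
  | 0 => (0, 0)
  | i+1 =>
    if (bidx e i).2 + 1 < blen (e (bidx e i).1) then ((bidx e i).1, (bidx e i).2 + 1)
    else ((bidx e i).1 + 1, 0)

def Phi (e : ℕ → ℕ) (i : ℕ) : ℕ := (phiL (e (bidx e i).1)).getD (bidx e i).2 0

lemma blen_cases (a : ℕ) : (a = 0 ∧ blen a = 1) ∨ (a ≠ 0 ∧ blen a = 3) := by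
  by_cases h : a = 0 <;> simp [blen, phiL, h]

lemma blen_pos (a : ℕ) : 1 ≤ blen a := by rcases blen_cases a with ⟨-, h⟩ | ⟨-, h⟩ <;> omega

lemma blen_odd (a : ℕ) : blen a % 2 = 1 := by
  rcases blen_cases a with ⟨-, h⟩ | ⟨-, h⟩ <;> omega

lemma phiL_getD0 (a : ℕ) : (phiL a).getD 0 0 = 1 := by
  by_cases h : a = 0 <;> simp [phiL, h]

lemma bpos_mono {e : ℕ → ℕ} {m m' : ℕ} (h : m ≤ m') : bpos e m ≤ bpos e m' := by
  induction m' with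
  | zero => have : m = 0 := by omega
            subst this; exact le_refl _
  | succ n ih =>
    rcases Nat.lt_or_ge m (n+1) with hl | hg
    · have h1 := ih (by omega)
      show bpos e m ≤ bpos e n + blen (e n)
      have := blen_pos (e n); omega
    · have : m = n + 1 := by omega
      subst this; exact le_refl _
  
lemma bpos_strict {e : ℕ → ℕ} {m m' : ℕ} (h : m < m') : bpos e m < bpos e m' := by
  have h1 : bpos e (m+1) ≤ bpos e m' := bpos_mono h
  have := blen_pos (e m)
  simp [bpos] at h1; omega

lemma le_bpos (e : ℕ → ℕ) (m : ℕ) : m ≤ bpos e m := by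
  induction m with
  | zero => simp [bpos]
  | succ n ih => have := blen_pos (e n); simp [bpos]; omega

lemma bpos_mod2 (e : ℕ → ℕ) (m : ℕ) : bpos e m % 2 = m % 2 := by
  induction m with
  | zero => rfl
  | succ n ih => have := blen_odd (e n); simp [bpos]; omega

lemma bidx_spec (e : ℕ → ℕ) (i : ℕ) :
    bpos e (bidx e i).1 + (bidx e i).2 = i ∧ (bidx e i).2 < blen (e (bidx e i).1) := by
  induction i with
  | zero => exact ⟨rfl, blen_pos _⟩
  | succ n ih =>
    rcases ih with ⟨h1, h2⟩
    by_cases hc : (bidx e n).2 + 1 < blen (e (bidx e n).1)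
    · rw [bidx, if_pos hc]; exact ⟨by simpa using by omega, hc⟩
    · rw [bidx, if_neg hc]
      refine ⟨?_, blen_pos _⟩
      show bpos e ((bidx e n).1 + 1) + 0 = n + 1
      show bpos e (bidx e n).1 + blen (e (bidx e n).1) + 0 = n + 1
      omega

lemma bidx_unique {e : ℕ → ℕ} {m r m' r' : ℕ} (hr : r < blen (e m)) (hr' : r' < blen (e m'))
    (heq : bpos e m + r = bpos e m' + r') : m = m' ∧ r = r' := by
  rcases lt_trichotomy m m' with hl | he | hl
  · exfalso
    have h1 : bpos e (m+1) ≤ bpos e m' := bpos_mono hl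
    have : bpos e (m+1) = bpos e m + blen (e m) := rfl
    omega
  · subst he; omega
  · exfalso
    have h1 : bpos e (m'+1) ≤ bpos e m := bpos_mono hl
    have : bpos e (m'+1) = bpos e m' + blen (e m') := rfl
    omega

lemma bidx_of {e : ℕ → ℕ} {m r : ℕ} (hr : r < blen (e m)) : bidx e (bpos e m + r) = (m, r) := by
  obtain ⟨h1, h2⟩ := bidx_spec e (bpos e m + r)
  obtain ⟨hm, hrr⟩ := bidx_unique h2 hr h1
  rw [Prod.ext_iff]; exact ⟨hm, hrr⟩

lemma bpos_congr {a b : ℕ → ℕ} {m : ℕ} (h : ∀ j < m, a j = b j) : bpos a m = bpos b m := by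
  induction m with
  | zero => rfl
  | succ n ih =>
    show bpos a n + blen (a n) = bpos b n + blen (b n)
    rw [ih (fun j hj => h j (by omega)), h n (by omega)]

lemma bidx_congr {a b : ℕ → ℕ} {m : ℕ} (h : ∀ j < m, a j = b j) :
    ∀ i ≤ bpos a m, bidx a i = bidx b i := by
  intro i hi
  induction i with
  | zero => rfl
  | succ n ih =>
    have hn := ih (by omega)
    have hlt : (bidx a n).1 < m := by
      obtain ⟨h1, h2⟩ := bidx_spec a n
      by_contra hc
      have := bpos_mono (e := a) (Nat.le_of_not_lt hc)
      omega
    have hab : a (bidx a n).1 = b (bidx a n).1 := h _ hlt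
    rw [bidx, bidx, ← hn, ← hab]

lemma Phi_congr {a b : ℕ → ℕ} {m : ℕ} (h : ∀ j < m, a j = b j) :
    ∀ i ≤ bpos a m, Phi a i = Phi b i := by
  intro i hi
  have hx := bidx_congr h i hi
  unfold Phi
  rw [← hx]
  obtain ⟨h1, h2⟩ := bidx_spec a i
  rcases Nat.lt_or_ge (bidx a i).1 m with hl | hg
  · rw [h _ hl]
  · have hpos := bpos_mono (e := a) hg
    have hi0 : (bidx a i).2 = 0 := by omega
    rw [hi0, phiL_getD0, phiL_getD0]

lemma bpos_shift (e : ℕ → ℕ) (k m : ℕ) : bpos e (k + m) = bpos e k + bpos (shiftSeq e k) m := by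
  induction m with
  | zero => rfl
  | succ n ih =>
    show bpos e (k + n) + blen (e (k + n)) = bpos e k + (bpos (shiftSeq e k) n + blen (shiftSeq e k n))
    rw [ih]; simp [shiftSeq]; omega

lemma Phi_shift (e : ℕ → ℕ) (k i : ℕ) : Phi (shiftSeq e k) i = Phi e (bpos e k + i) := by
  obtain ⟨h1, h2⟩ := bidx_spec (shiftSeq e k) i
  set m := (bidx (shiftSeq e k) i).1
  set r := (bidx (shiftSeq e k) i).2
  have hb : bpos e k + i = bpos e (k + m) + r := by rw [bpos_shift]; omega
  have hlen : r < blen (e (k + m)) := h2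
  have := bidx_of (e := e) hlen
  unfold Phi
  rw [hb, this]
  simp [shiftSeq]; rfl

lemma Phi_pres {a b : ℕ → ℕ} (ha : ∀ i, a i ≤ 1) (hb : ∀ i, b i ≤ 1) {m : ℕ}
    (heq : ∀ i < m, a i = b i) (hc : if Even m then b m < a m else a m < b m) :
    (∀ i < bpos a m + 1, Phi a i = Phi b i) ∧
    (if Even (bpos a m + 1) then Phi b (bpos a m + 1) < Phi a (bpos a m + 1)
     else Phi a (bpos a m + 1) < Phi b (bpos a m + 1)) := by
  have hP : bpos b m = bpos a m := (bpos_congr heq).symm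
  constructor
  · intro i hi; exact Phi_congr heq i (by omega)
  · have hm2 := bpos_mod2 a m
    rcases Nat.even_or_odd m with hev | hod
    · rw [if_pos hev] at hc
      have ham : a m = 1 := by have := ha m; omega
      have hbm : b m = 0 := by omega
      have hia : bidx a (bpos a m + 1) = (m, 1) := by
        apply bidx_of; rcases blen_cases (a m) with ⟨h0, -⟩ | ⟨-, h3⟩ <;> omega
      have hib : bidx b (bpos a m + 1) = (m + 1, 0) := by
        have h1 : blen (b m) = 1 := by rcases blen_cases (b m) with ⟨-, h⟩ | ⟨h0, -⟩ <;> omega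
        have : bpos a m + 1 = bpos b (m + 1) + 0 := by
          show bpos a m + 1 = bpos b m + blen (b m) + 0; omega
        rw [this]; exact bidx_of (blen_pos _)
      have hva : Phi a (bpos a m + 1) = 0 := by
        unfold Phi; rw [hia, ham]; rfl
      have hvb : Phi b (bpos a m + 1) = 1 := by
        unfold Phi; rw [hib]; exact phiL_getD0 _
      have hPe : Even (bpos a m) := by
        rw [Nat.even_iff]; rw [Nat.even_iff] at hev; omega
      rw [if_neg (by simp [Nat.even_add_one, hPe]), hva, hvb]; omega
    · rw [if_neg (by simpa using hod)] at hc
      have ham : a m = 0 := by have := hb m; omega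
      have hbm : b m = 1 := by have := hb m; omega
      have hia : bidx a (bpos a m + 1) = (m + 1, 0) := by
        have h1 : blen (a m) = 1 := by rcases blen_cases (a m) with ⟨-, h⟩ | ⟨h0, -⟩ <;> omega
        have : bpos a m + 1 = bpos a (m + 1) + 0 := by
          show bpos a m + 1 = bpos a m + blen (a m) + 0; omega
        rw [this]; exact bidx_of (blen_pos _)
      have hib : bidx b (bpos a m + 1) = (m, 1) := by
        rw [← hP]; apply bidx_of
        rcases blen_cases (b m) with ⟨h0, -⟩ | ⟨-, h3⟩ <;> omega
      have hva : Phi a (bpos a m + 1) = 1 := by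
        unfold Phi; rw [hia]; exact phiL_getD0 _
      have hvb : Phi b (bpos a m + 1) = 0 := by
        unfold Phi; rw [hib, hbm]; rfl
      have hPo : ¬ Even (bpos a m) := by
        rw [Nat.even_iff]; rw [Nat.odd_iff] at hod; omega
      rw [if_pos (Nat.even_add_one.mpr hPo), hva, hvb]; omega

lemma altLt_Phi {a b : ℕ → ℕ} (ha : ∀ i, a i ≤ 1) (hb : ∀ i, b i ≤ 1)
    (h : altLt a b) : altLt (Phi a) (Phi b) := by
  obtain ⟨m, h1, h2⟩ := h
  obtain ⟨g1, g2⟩ := Phi_pres ha hb h1 h2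
  exact ⟨bpos a m + 1, g1, g2⟩

lemma uW_succ (n : ℕ) : uW (n + 1) = phiW (uW n) := Function.iterate_succ_apply' _ _ _

lemma phiW_append (w1 w2 : List ℕ) : phiW (w1 ++ w2) = phiW w1 ++ phiW w2 :=
  List.flatMap_append

lemma phiW_prefix {w1 w2 : List ℕ} (h : w1 <+: w2) : phiW w1 <+: phiW w2 := by
  obtain ⟨t, ht⟩ := h
  exact ⟨phiW t, by rw [← ht, phiW_append]⟩

lemma uW_prefix_succ (n : ℕ) : uW n <+: uW (n + 1) := by
  induction n with
  | zero => exact ⟨[0, 0], rfl⟩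
  | succ k ih => rw [uW_succ, uW_succ]; exact phiW_prefix ih

lemma uW_prefix {m n : ℕ} (h : m ≤ n) : uW m <+: uW n := by
  induction n with
  | zero => have : m = 0 := by omega
            subst this; exact List.prefix_refl _
  | succ k ih =>
    rcases Nat.lt_or_ge m (k + 1) with hl | hg
    · exact (ih (by omega)).trans (uW_prefix_succ k)
    · have : m = k + 1 := by omega
      subst this; exact List.prefix_refl _

lemma phiW_len_ge (w : List ℕ) : w.length ≤ (phiW w).length := by
  induction w with
  | nil => simp [phiW]
  | cons a t ih =>
    have h : phiW (a :: t) = phiL a ++ phiW t := rfl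
    have : 1 ≤ (phiL a).length := by by_cases h : a = 0 <;> simp [phiL, h]
    simp [h]; omega

lemma phiW_len_gt {w : List ℕ} (h : 1 ∈ w) : w.length + 2 ≤ (phiW w).length := by
  induction w with
  | nil => simp at h
  | cons a t ih =>
    have hc : phiW (a :: t) = phiL a ++ phiW t := rfl
    by_cases ha : a = 0
    · have h1 : 1 ∈ t := by
        rcases List.mem_cons.1 h with h' | h'
        · exfalso; omega
        · exact h'
      have h2 := ih h1
      rw [hc]
      simp only [List.length_append, List.length_cons]
      have : (phiL a).length = 1 := by simp [phiL, ha]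
      omega
    · have h2 := phiW_len_ge t
      rw [hc]
      simp only [List.length_append, List.length_cons]
      have : (phiL a).length = 3 := by simp [phiL, ha]
      omega

lemma one_mem_uW (n : ℕ) : 1 ∈ uW n := by
  induction n with
  | zero => simp [uW]
  | succ k ih =>
    rw [uW_succ]
    refine List.mem_flatMap.2 ⟨1, ih, ?_⟩
    simp [phiL]

lemma uW_len (n : ℕ) : n + 1 ≤ (uW n).length := by
  induction n with
  | zero => simp [uW]
  | succ k ih =>
    rw [uW_succ]
    have := phiW_len_gt (one_mem_uW k)
    omega

lemma getD_prefix {l l' : List ℕ} (h : l <+: l') {i : ℕ} (hi : i < l.length) :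
    l.getD i 0 = l'.getD i 0 := by
  rw [List.getD_eq_getElem _ _ hi, List.getD_eq_getElem _ _ (lt_of_lt_of_le hi h.length_le)]
  exact h.getElem hi

lemma uW_getD (n i : ℕ) (hi : i < (uW n).length) : (uW n).getD i 0 = phiInf i := by
  show _ = (uW (i + 1)).getD i 0
  rcases Nat.le_total n (i + 1) with hle | hle
  · exact getD_prefix (uW_prefix hle) hi
  · exact (getD_prefix (uW_prefix hle) (by have := uW_len (i+1); omega)).symm

lemma phiInf_le_one (i : ℕ) : phiInf i ≤ 1 := by
  have hmem : ∀ n x, x ∈ uW n → x ≤ 1 := by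
    intro n
    induction n with
    | zero => intro x hx; simp [uW] at hx; omega
    | succ k ih =>
      intro x hx
      rw [uW_succ] at hx
      obtain ⟨a, ha, hxa⟩ := List.mem_flatMap.1 hx
      by_cases h : a = 0 <;> simp [phiL, h] at hxa <;> omega
  show (uW (i+1)).getD i 0 ≤ 1
  have hi : i < (uW (i+1)).length := by have := uW_len (i+1); omega
  rw [List.getD_eq_getElem _ _ hi]
  exact hmem _ _ (List.getElem_mem _)


def prefList (m : ℕ) : List ℕ := (List.range m).map phiInf

lemma prefList_succ (m : ℕ) : prefList (m + 1) = prefList m ++ [phiInf m] := by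
  simp [prefList, List.range_succ]

lemma prefList_length (m : ℕ) : (prefList m).length = m := by simp [prefList]

lemma prefList_eq_take (m : ℕ) : prefList m = (uW m).take m := by
  apply List.ext_getElem
  · simp [prefList_length]
    have := uW_len m; omega
  · intro i h1 h2
    have hi : i < m := by simpa [prefList_length] using h1
    have hium : i < (uW m).length := by have := uW_len m; omega
    simp only [prefList, List.getElem_map, List.getElem_range, List.getElem_take]
    rw [← uW_getD m i hium, List.getD_eq_getElem _ _ hium]

lemma bpos_phiInf (m : ℕ) : bpos phiInf m = (phiW (prefList m)).length := by
  induction m with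
  | zero => rfl
  | succ n ih =>
    show bpos phiInf n + blen (phiInf n) = _
    rw [prefList_succ, phiW_append, List.length_append, ih]
    have : phiW [phiInf n] = phiL (phiInf n) := by simp [phiW]
    rw [this]; rfl

lemma phiW_prefList_getD (m i : ℕ) (hi : i < (phiW (prefList m)).length) :
    (phiW (prefList m)).getD i 0 = phiInf i := by
  have hpre : phiW (prefList m) <+: uW (m + 1) := by
    rw [uW_succ]
    exact phiW_prefix (prefList_eq_take m ▸ List.take_prefix m (uW m))
  have hlen : i < (uW (m+1)).length := lt_of_lt_of_le hi hpre.length_le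
  rw [getD_prefix hpre hi]
  exact uW_getD _ _ hlen

lemma phiInf_block (m r : ℕ) (hr : r < blen (phiInf m)) :
    phiInf (bpos phiInf m + r) = (phiL (phiInf m)).getD r 0 := by
  have hlen : bpos phiInf m + r < (phiW (prefList (m+1))).length := by
    have h1 : (phiW (prefList (m+1))).length = bpos phiInf (m+1) := (bpos_phiInf _).symm
    have h2 : bpos phiInf (m+1) = bpos phiInf m + blen (phiInf m) := rfl
    omega
  have h3 := phiW_prefList_getD (m+1) _ hlen
  rw [← h3]
  rw [prefList_succ, phiW_append]
  have h4 : phiW [phiInf m] = phiL (phiInf m) := by simp [phiW]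
  rw [h4, List.getD_eq_getElem?_getD, List.getElem?_append_right (by rw [← bpos_phiInf]; omega)]
  rw [← bpos_phiInf]
  simp only [Nat.add_sub_cancel_left]
  rw [← List.getD_eq_getElem?_getD]

lemma Phi_phiInf : Phi phiInf = phiInf := by
  funext i
  obtain ⟨h1, h2⟩ := bidx_spec phiInf i
  unfold Phi
  rw [← phiInf_block _ _ h2, h1]

lemma phiInf0 : phiInf 0 = 1 := by decide
lemma phiInf1 : phiInf 1 = 0 := by decide
lemma phiInf2 : phiInf 2 = 0 := by decide
lemma phiInf3 : phiInf 3 = 1 := by decide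


lemma d0_pos (d : ℕ → ℕ) (hlyn : ∀ j, 1 ≤ j → altLt d (shiftSeq d j)) : 1 ≤ d 0 := by
  by_contra hc
  have h0 : d 0 = 0 := by omega
  have hz : ∀ n, d n = 0 := by
    intro n
    induction n using Nat.strong_induction_on with
    | _ n IHn =>
      match n with
      | 0 => exact h0
      | p + 1 =>
        obtain ⟨j, hj1, hj2⟩ := hlyn (p+1) (by omega)
        have hs : ∀ i, shiftSeq d (p+1) i = d (p+1+i) := fun i => rfl
        match j with
        | 0 =>
          rw [if_pos (by decide), hs 0] at hj2
          have : p + 1 + 0 = p + 1 := rfl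
          rw [this] at hj2; omega
        | j + 1 =>
          have hx := hj1 0 (by omega)
          rw [hs 0] at hx
          have : p + 1 + 0 = p + 1 := rfl
          rw [this] at hx; omega
  have hsh : shiftSeq d 1 = d := by
    funext i; simp [shiftSeq, hz]
  have := hlyn 1 (le_refl 1)
  rw [hsh] at this
  exact altLt_irrefl d this

lemma d_le_d0 (d : ℕ → ℕ) (hlyn : ∀ j, 1 ≤ j → altLt d (shiftSeq d j)) (i : ℕ) : d i ≤ d 0 := by
  match i with
  | 0 => exact le_refl _
  | p + 1 =>
    obtain ⟨j, hj1, hj2⟩ := hlyn (p+1) (by omega)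
    have hs0 : shiftSeq d (p+1) 0 = d (p+1) := rfl
    match j with
    | 0 => rw [if_pos (by decide), hs0] at hj2; omega
    | j + 1 => have := hj1 0 (by omega); rw [hs0] at this; omega

def pD (d : ℕ → ℕ) : ℕ → ℕ
  | 0 => 0
  | m+1 => pD d m + (if d (pD d m + 1) = 0 then 3 else 1)

def eD (d : ℕ → ℕ) (m : ℕ) : ℕ := if d (pD d m + 1) = 0 then 1 else 0

lemma pD_ge (d : ℕ → ℕ) (m : ℕ) : m ≤ pD d m := by
  induction m with
  | zero => exact le_refl _
  | succ n ih =>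
    show n + 1 ≤ pD d n + (if d (pD d n + 1) = 0 then 3 else 1)
    split <;> omega

lemma main_ind : ∀ k : ℕ, ∀ d : ℕ → ℕ, (∀ i, d i ≤ 1) →
    (∀ j, 1 ≤ j → altLt d (shiftSeq d j)) →
    (∀ i < k, phiInf i = d i) →
    (if Even k then d k < phiInf k else phiInf k < d k) → False := by
  intro k
  induction k using Nat.strong_induction_on with
  | _ k IH =>
  intro d hbin hlyn hpre hcond
  match k, hpre, hcond, IH with
  | 0, hpre, hcond, IH =>
    rw [if_pos (by decide), phiInf0] at hcond
    have := d0_pos d hlyn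
    omega
  | (K+1), hpre, hcond, IH =>
  have h0 : d 0 = 1 := by rw [← hpre 0 (by omega), phiInf0]
  -- d 1 = 0
  have h1 : d 1 = 0 := by
    by_contra hc
    have h1' : d 1 = 1 := by have := hbin 1; omega
    have hex0 : ∃ m, d m = 0 := by
      by_contra hc2
      push_neg at hc2
      have hall : ∀ i, d i = 1 := fun i => by have := hbin i; have := hc2 i; omega
      have hsh : shiftSeq d 1 = d := by funext i; simp [shiftSeq, hall]
      have := hlyn 1 (le_refl 1)
      rw [hsh] at this
      exact altLt_irrefl d this
    obtain ⟨m, hdm, hlt⟩ : ∃ m, d m = 0 ∧ ∀ i < m, d i = 1 :=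
      ⟨Nat.find hex0, Nat.find_spec hex0, fun i hi => by
        have h3 := Nat.find_min hex0 hi; have := hbin i; omega⟩
    have hm2 : 2 ≤ m := by
      rcases Nat.lt_or_ge m 2 with hl | hg
      · exfalso
        have : m = 0 ∨ m = 1 := by omega
        rcases this with rfl | rfl <;> omega
      · exact hg
    obtain ⟨j, hj1, hj2⟩ := hlyn (m - 1) (by omega)
    have hs0 : shiftSeq d (m-1) 0 = d (m-1) := rfl
    have hs1 : shiftSeq d (m-1) 1 = d m := by
      show d (m-1+1) = d m; congr 1; omega
    have hdm1 : d (m-1) = 1 := hlt _ (by omega)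
    match j with
    | 0 => rw [if_pos (by decide), hs0] at hj2; omega
    | 1 => rw [if_neg (by decide), hs1] at hj2; omega
    | (j+2) => have := hj1 1 (by omega); rw [hs1] at this; omega
  match K, hpre, hcond, IH with
  | 0, hpre, hcond, IH =>
    rw [if_neg (by decide)] at hcond
    rw [show (0:ℕ)+1 = 1 from rfl] at hcond
    rw [phiInf1] at hcond; omega
  | (K+1), hpre, hcond, IH =>
  match K, hpre, hcond, IH with
  | 0, hpre, hcond, IH =>
    have he : Even (0+1+1 : ℕ) := by decide
    rw [if_pos he] at hcond
    have : phiInf (0+1+1) = 0 := phiInf2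
    omega
  | (K+1), hpre, hcond, IH =>
  have h2 : d 2 = 0 := by rw [← hpre 2 (by omega), phiInf2]
  match K, hpre, hcond, IH with
  | 0, hpre, hcond, IH =>
    have he : ¬ Even (0+1+1+1 : ℕ) := by decide
    rw [if_neg he] at hcond
    have h3' : phiInf (0+1+1+1) = 1 := phiInf3
    have := hbin (0+1+1+1)
    omega
  | (K+1), hpre, hcond, IH =>
  have h3 : d 3 = 1 := by rw [← hpre 3 (by omega), phiInf3]
  -- structural facts
  have no101 : ∀ q, d q = 1 → d (q+1) = 0 → d (q+2) = 0 := by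
    intro q hq hq1
    by_contra hc
    have hq2 : d (q+2) = 1 := by have := hbin (q+2); omega
    rcases Nat.eq_zero_or_pos q with rfl | hqpos
    · have e2 : (0:ℕ)+2 = 2 := rfl
      rw [e2] at hq2; omega
    · obtain ⟨j, hj1, hj2⟩ := hlyn q hqpos
      have hs0 : shiftSeq d q 0 = d q := by show d (q+0) = d q; rw [Nat.add_zero]
      have hs1 : shiftSeq d q 1 = d (q+1) := rfl
      have hs2 : shiftSeq d q 2 = d (q+2) := rfl
      match j with
      | 0 => rw [if_pos (by decide), hs0] at hj2; omega
      | 1 => rw [if_neg (by decide), hs1] at hj2; omega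
      | 2 => rw [if_pos (by decide), hs2] at hj2; omega
      | (j+3) => have := hj1 2 (by omega); rw [hs2] at this; omega
  have no1000 : ∀ q, d q = 1 → d (q+1) = 0 → d (q+3) = 1 := by
    intro q hq hq1
    by_contra hc
    have hq3 : d (q+3) = 0 := by have := hbin (q+3); omega
    have hq2 : d (q+2) = 0 := no101 q hq hq1
    rcases Nat.eq_zero_or_pos q with rfl | hqpos
    · have e3 : (0:ℕ)+3 = 3 := rfl
      rw [e3] at hq3; omega
    · obtain ⟨j, hj1, hj2⟩ := hlyn q hqpos
      have hs0 : shiftSeq d q 0 = d q := by show d (q+0) = d q; rw [Nat.add_zero]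
      have hs1 : shiftSeq d q 1 = d (q+1) := rfl
      have hs2 : shiftSeq d q 2 = d (q+2) := rfl
      have hs3 : shiftSeq d q 3 = d (q+3) := rfl
      match j with
      | 0 => rw [if_pos (by decide), hs0] at hj2; omega
      | 1 => rw [if_neg (by decide), hs1] at hj2; omega
      | 2 => rw [if_pos (by decide), hs2] at hj2; omega
      | 3 => rw [if_neg (by decide), hs3] at hj2; omega
      | (j+4) => have := hj1 3 (by omega); rw [hs3] at this; omega
  -- desubstitution
  have inv : ∀ m, d (pD d m) = 1 := by
    intro m
    induction m with
    | zero => exact h0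
    | succ n ih =>
      show d (pD d n + (if d (pD d n + 1) = 0 then 3 else 1)) = 1
      split
      · next hd => exact no1000 _ ih hd
      · next hd => have := hbin (pD d n + 1); omega
  have poseq : ∀ m, bpos (eD d) m = pD d m := by
    intro m
    induction m with
    | zero => rfl
    | succ n ih =>
      show bpos (eD d) n + blen (eD d n) = pD d n + (if d (pD d n + 1) = 0 then 3 else 1)
      have hb : blen (eD d n) = if d (pD d n + 1) = 0 then 3 else 1 := by
        show blen (if d (pD d n + 1) = 0 then 1 else 0) = _
        split <;> rfl
      rw [ih, hb]
  have ebin : ∀ i, eD d i ≤ 1 := by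
    intro i
    show (if d (pD d i + 1) = 0 then 1 else 0) ≤ 1
    split <;> omega
  have deq : d = Phi (eD d) := by
    funext i
    obtain ⟨hs1, hs2⟩ := bidx_spec (eD d) i
    obtain ⟨⟨m, r⟩, hmr⟩ : ∃ p, bidx (eD d) i = p := ⟨_, rfl⟩
    rw [hmr] at hs1 hs2
    dsimp only at hs1 hs2
    rw [poseq] at hs1
    show d i = Phi (eD d) i
    unfold Phi
    rw [hmr]
    dsimp only
    have he : eD d m = if d (pD d m + 1) = 0 then 1 else 0 := rfl
    by_cases hd : d (pD d m + 1) = 0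
    · have he1 : eD d m = 1 := by rw [he, if_pos hd]
      rw [he1] at hs2 ⊢
      have hr3 : r < 3 := by have hb3 : blen 1 = 3 := rfl; omega
      interval_cases r
      · have hi : i = pD d m := by omega
        rw [hi]
        simpa [phiL] using inv m
      · have hi : i = pD d m + 1 := by omega
        rw [hi]
        simpa [phiL] using hd
      · have hi : i = pD d m + 2 := by omega
        rw [hi]
        simpa [phiL] using no101 _ (inv m) hd
    · have he0 : eD d m = 0 := by rw [he, if_neg hd]
      rw [he0] at hs2 ⊢
      have hr0 : r = 0 := by have hb1 : blen 0 = 1 := rfl; omega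
      rw [hr0] at hs1 ⊢
      have hi : i = pD d m := by omega
      rw [hi]
      simpa [phiL] using inv m
  have shifteq : ∀ κ, shiftSeq d (pD d κ) = Phi (shiftSeq (eD d) κ) := by
    intro κ
    funext i
    rw [Phi_shift]
    show d (pD d κ + i) = Phi (eD d) (bpos (eD d) κ + i)
    rw [poseq, ← deq]
  have elyn : ∀ j, 1 ≤ j → altLt (eD d) (shiftSeq (eD d) j) := by
    intro j hj
    rcases alt_trichotomy (eD d) (shiftSeq (eD d) j) with he | hlt | hgt
    · exfalso
      have hdd : shiftSeq d (pD d j) = d := by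
        rw [shifteq, ← he, ← deq]
      have hl := hlyn (pD d j) (le_trans hj (pD_ge d j))
      rw [hdd] at hl
      exact altLt_irrefl d hl
    · exact hlt
    · exfalso
      have hsbin : ∀ i, shiftSeq (eD d) j i ≤ 1 := fun i => ebin _
      have hx := altLt_Phi hsbin ebin hgt
      rw [← shifteq, ← deq] at hx
      exact altLt_asymm hx (hlyn (pD d j) (le_trans hj (pD_ge d j)))
  -- descent
  rcases alt_trichotomy phiInf (eD d) with he | hlt | hgt
  · have hdu : d = phiInf := by rw [deq, ← he, Phi_phiInf]
    rw [hdu] at hcond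
    split at hcond <;> omega
  · obtain ⟨m, hm1, hm2⟩ := hlt
    obtain ⟨g1, g2⟩ := Phi_pres phiInf_le_one ebin hm1 hm2
    rw [Phi_phiInf, ← deq] at g1 g2
    have hkval : K+1+1+1+1 = bpos phiInf m + 1 :=
      altLt_witness_unique hpre hcond g1 g2
    have hmK : m < K+1+1+1+1 := by
      have := le_bpos phiInf m; omega
    exact IH m hmK (eD d) ebin elyn hm1 hm2
  · have hx := altLt_Phi ebin phiInf_le_one hgt
    rw [← deq, Phi_phiInf] at hx
    exact altLt_asymm hx ⟨K+1+1+1+1, hpre, hcond⟩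


/-- `φ^∞(1)` is the greatest non-periodic alternate Lyndon word: if `(d_i)` is
strictly smaller than all of its proper shifts, then `(d_i) ⪯ φ^∞(1)`. -/
theorem stmt12 (d : ℕ → ℕ) (N : ℕ) (hbound : ∀ i, d i ≤ N)
    (h : ∀ k : ℕ, 1 ≤ k → altLt d (shiftSeq d k)) :
    altLe d phiInf := by
  rcases alt_trichotomy d phiInf with he | hlt | hgt
  · exact Or.inl he
  · exact Or.inr hlt
  · have hd0 : 1 ≤ d 0 := d0_pos d h
    rcases Nat.lt_or_ge (d 0) 2 with hlt2 | hge2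
    · have hbin1 : ∀ i, d i ≤ 1 := fun i => le_trans (d_le_d0 d h i) (by omega)
      obtain ⟨k, h1, h2⟩ := hgt
      exact (main_ind k d hbin1 h h1 h2).elim
    · right
      exact ⟨0, fun i hi => absurd hi (by omega),
        by rw [if_pos (by decide), phiInf0]; omega⟩
end

section
/- Say that a real β ≥ 1 is associated to an alternate Lyndon word (d_i)_{i≥1} if the Lyndon system M((d_i)) has topological entropy log β. If β ≥ 1 is associated to at least two distinct alternate Lyndon words, then there exists a periodic (weak) alternate Lyndon word associated to β. -/
open Filter Topology

namespace AltAux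

def Agree (x y : ℕ → ℕ) (m : ℕ) : Prop := ∀ i < m, x i = y i

def Dir (x y : ℕ → ℕ) (m : ℕ) : Prop := if Even m then y m < x m else x m < y m

lemma altLt_iff {x y : ℕ → ℕ} : altLt x y ↔ ∃ k, Agree x y k ∧ Dir x y k := Iff.rfl

lemma Dir.ne {x y : ℕ → ℕ} {m : ℕ} (h : Dir x y m) : x m ≠ y m := by
  unfold Dir at h
  by_cases he : Even m
  · rw [if_pos he] at h; exact (ne_of_gt h)
  · rw [if_neg he] at h; exact (ne_of_lt h)

lemma dir_congr {x y x' y' : ℕ → ℕ} {m m' : ℕ} (hpar : Even m ↔ Even m')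
    (hx : x m = x' m') (hy : y m = y' m') (h : Dir x y m) : Dir x' y' m' := by
  unfold Dir at h ⊢
  by_cases he : Even m
  · rw [if_pos he] at h; rw [if_pos (hpar.mp he)]; rw [← hx, ← hy]; exact h
  · rw [if_neg he] at h; rw [if_neg (fun h' => he (hpar.mpr h'))]; rw [← hx, ← hy]; exact h


lemma dir_flip {x y x' y' : ℕ → ℕ} {m m' : ℕ} (hpar : Even m ↔ ¬ Even m')
    (hx : x m = y' m') (hy : y m = x' m') (h : Dir x y m) : Dir x' y' m' := by
  unfold Dir at h ⊢
  by_cases he : Even m'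
  · rw [if_pos he]
    have hm : ¬ Even m := fun h2 => (hpar.mp h2) he
    rw [if_neg hm] at h
    rw [← hx, ← hy]; exact h
  · rw [if_neg he]
    have hm : Even m := hpar.mpr he
    rw [if_pos hm] at h
    rw [← hx, ← hy]; exact h

lemma agree_ne_unique {x y : ℕ → ℕ} {a b : ℕ} (ha : Agree x y a) (ha' : x a ≠ y a)
    (hb : Agree x y b) (hb' : x b ≠ y b) : a = b := by
  rcases lt_trichotomy a b with h | h | h
  · exact absurd (hb a h) ha'
  · exact h
  · exact absurd (ha b h) hb'

lemma dir_asymm {x y : ℕ → ℕ} {m : ℕ} (h : Dir x y m) (h' : Dir y x m) : False := by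
  unfold Dir at h h'
  by_cases he : Even m
  · rw [if_pos he] at h h'; omega
  · rw [if_neg he] at h h'; omega

lemma altLt_asymm {x y : ℕ → ℕ} (h : altLt x y) (h' : altLt y x) : False := by
  obtain ⟨a, ha, hda⟩ := altLt_iff.mp h
  obtain ⟨b, hb, hdb⟩ := altLt_iff.mp h'
  have hab : a = b := agree_ne_unique ha hda.ne (fun i hi => (hb i hi).symm) (fun he => hdb.ne he.symm)
  subst hab
  exact dir_asymm hda hdb

lemma altLt_irrefl {x : ℕ → ℕ} (h : altLt x x) : False := altLt_asymm h h

lemma altLt_total {x y : ℕ → ℕ} (h : x ≠ y) : altLt x y ∨ altLt y x := by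
  have hex : ∃ i, x i ≠ y i := by
    by_contra h'; push_neg at h'; exact h (funext h')
  have hk : x (Nat.find hex) ≠ y (Nat.find hex) := Nat.find_spec hex
  have hag : Agree x y (Nat.find hex) := fun i hi => not_not.mp (Nat.find_min hex hi)
  by_cases he : Even (Nat.find hex)
  · rcases lt_or_gt_of_ne hk with hlt | hgt
    · exact Or.inr (altLt_iff.mpr ⟨_, fun i hi => (hag i hi).symm, by unfold Dir; rw [if_pos he]; exact hlt⟩)
    · exact Or.inl (altLt_iff.mpr ⟨_, hag, by unfold Dir; rw [if_pos he]; exact hgt⟩)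
  · rcases lt_or_gt_of_ne hk with hlt | hgt
    · exact Or.inl (altLt_iff.mpr ⟨_, hag, by unfold Dir; rw [if_neg he]; exact hlt⟩)
    · exact Or.inr (altLt_iff.mpr ⟨_, fun i hi => (hag i hi).symm, by unfold Dir; rw [if_neg he]; exact hgt⟩)

lemma trans_wit {x y z : ℕ → ℕ} {a b : ℕ} (ha : Agree x y a) (hda : Dir x y a)
    (hb : Agree y z b) (hdb : Dir y z b) :
    Agree x z (min a b) ∧ Dir x z (min a b) := by
  rcases lt_trichotomy a b with h | h | h
  · rw [min_eq_left h.le]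
    refine ⟨fun i hi => (ha i hi).trans (hb i (hi.trans h)), ?_⟩
    exact dir_congr Iff.rfl rfl (hb a h) hda
  · subst h
    rw [min_self]
    refine ⟨fun i hi => (ha i hi).trans (hb i hi), ?_⟩
    unfold Dir at hda hdb ⊢
    by_cases he : Even a
    · rw [if_pos he] at hda hdb ⊢; exact hdb.trans hda
    · rw [if_neg he] at hda hdb ⊢; exact hda.trans hdb
  · rw [min_eq_right h.le]
    refine ⟨fun i hi => (ha i (hi.trans h)).trans (hb i hi), ?_⟩
    exact dir_congr Iff.rfl (ha b h).symm rfl hdb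

lemma altLt_trans {x y z : ℕ → ℕ} (h : altLt x y) (h' : altLt y z) : altLt x z := by
  obtain ⟨a, ha, hda⟩ := altLt_iff.mp h
  obtain ⟨b, hb, hdb⟩ := altLt_iff.mp h'
  obtain ⟨h1, h2⟩ := trans_wit ha hda hb hdb
  exact altLt_iff.mpr ⟨_, h1, h2⟩

lemma altLe_refl (x : ℕ → ℕ) : altLe x x := Or.inl rfl

lemma altLe_trans {x y z : ℕ → ℕ} (h : altLe x y) (h' : altLe y z) : altLe x z := by
  rcases h with rfl | h
  · exact h'
  · rcases h' with rfl | h'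
    · exact Or.inr h
    · exact Or.inr (altLt_trans h h')

lemma altLt_le_trans {x y z : ℕ → ℕ} (h : altLt x y) (h' : altLe y z) : altLt x z := by
  rcases h' with rfl | h'
  · exact h
  · exact altLt_trans h h'

lemma altLe_lt_trans {x y z : ℕ → ℕ} (h : altLe x y) (h' : altLt y z) : altLt x z := by
  rcases h with rfl | h
  · exact h'
  · exact altLt_trans h h'


def Peri (x : ℕ → ℕ) : Prop := ∃ p : ℕ, 1 ≤ p ∧ ∀ i, x (i + p) = x i

lemma peri_of_shift_eq {x : ℕ → ℕ} {j : ℕ} (hj : 1 ≤ j) (h : x = shiftSeq x j) : Peri x :=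
  ⟨j, hj, fun i => by rw [Nat.add_comm]; exact (congrFun h i).symm⟩

lemma exists_between {d e : ℕ → ℕ} (hd : IsAltLyndon d) (he : IsAltLyndon e)
    (hpd : ¬ Peri d) (hpe : ¬ Peri e) (hlt : altLt d e) :
    ∃ f : ℕ → ℕ, IsAltLyndon f ∧ Peri f ∧ altLt d f ∧ altLt f e ∧ f 0 = e 0 := by
  obtain ⟨k, hkag, hkdir⟩ := altLt_iff.mp hlt
  obtain ⟨p, hpe2, hkp, hpk2⟩ : ∃ p, Even p ∧ k < p ∧ p ≤ k + 2 := by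
    rcases Nat.even_or_odd k with hke | hko
    · exact ⟨k + 2, hke.add even_two, by omega, le_refl _⟩
    · exact ⟨k + 1, hko.add_one, by omega, by omega⟩
  have hp0 : 0 < p := by omega
  set f : ℕ → ℕ := fun i => e (i % p) with hf
  have fval : ∀ i, i < p → f i = e i := fun i hi => by simp only [hf, Nat.mod_eq_of_lt hi]
  have fper : ∀ i, f (i + p) = f i := fun i => by simp only [hf, Nat.add_mod_right]
  have f0 : f 0 = e 0 := fval 0 hp0
  -- (1) d < f
  have hdf : altLt d f := by
    refine altLt_iff.mpr ⟨k, fun i hi => (hkag i hi).trans (fval i (by omega)).symm, ?_⟩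
    exact dir_congr Iff.rfl rfl (fval k hkp).symm hkdir
  -- (2) ¬ e < f
  have claimA : ¬ altLt e f := by
    rintro h
    obtain ⟨m, hag, hdir⟩ := altLt_iff.mp h
    have hmp : p ≤ m := by
      by_contra hc; push_neg at hc
      exact hdir.ne (fval m hc).symm
    have hsh : altLt e (shiftSeq e p) := by
      rcases he p with heq | h'
      · exact absurd (peri_of_shift_eq hp0 heq) hpe
      · exact h'
    obtain ⟨t, htag, htdir⟩ := altLt_iff.mp hsh
    have hA : Agree (shiftSeq e p) f (m - p) := by
      intro i hi
      have h1 : p + i < m := by omega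
      show e (p + i) = f i
      rw [hag _ h1]
      show f (p + i) = f i
      rw [Nat.add_comm p i]
      exact fper i
    have hD : Dir (shiftSeq e p) f (m - p) := by
      refine dir_congr (m := m) ?_ ?_ ?_ hdir
      · rw [Nat.even_sub hmp]; simp [hpe2]
      · exact (congrArg e (show p + (m - p) = m by omega)).symm
      · have h2 : m - p + p = m := by omega
        exact ((congrArg f h2).symm).trans (fper (m - p))
    obtain ⟨hA2, hD2⟩ := trans_wit htag htdir hA hD
    have := agree_ne_unique hA2 hD2.ne hag hdir.ne
    omega
  -- (3) f < e
  have hfne : f ≠ e := by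
    intro hfeq
    exact hpe ⟨p, hp0, fun i => by rw [← hfeq]; exact fper i⟩
  have hfe : altLt f e := (altLt_total hfne).resolve_right claimA
  -- (4) Lyndon
  have hlyn : IsAltLyndon f := by
    intro q
    have hshift_eq : shiftSeq f q = shiftSeq f (q % p) := by
      funext i
      show e ((q + i) % p) = e ((q % p + i) % p)
      congr 1
      conv_rhs => rw [Nat.mod_add_mod]
    rw [hshift_eq]
    by_cases hj0 : q % p = 0
    · rw [hj0]
      have : shiftSeq f 0 = f := funext fun i => by show f (0 + i) = f i; rw [Nat.zero_add]
      rw [this]; exact altLe_refl f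
    set j := q % p with hj
    have hj1 : 1 ≤ j := Nat.one_le_iff_ne_zero.mpr hj0
    have hjp : j < p := Nat.mod_lt q hp0
    set g := shiftSeq f j with hg
    by_contra hc
    have hne2 : f ≠ g := fun hh => hc (Or.inl hh)
    have hgf : altLt g f := by
      rcases altLt_total hne2 with h | h
      · exact absurd (Or.inr h) hc
      · exact h
    obtain ⟨m, hag, hdir⟩ := altLt_iff.mp hgf
    have gval1 : ∀ i, j + i < p → g i = e (j + i) := fun i hi => by
      show e ((j + i) % p) = e (j + i)
      rw [Nat.mod_eq_of_lt hi]
    have gval2 : ∀ i, p ≤ j + i → j + i < 2 * p → g i = e (j + i - p) := fun i hi hi2 => by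
      show e ((j + i) % p) = e (j + i - p)
      rw [Nat.mod_eq_sub_mod hi, Nat.mod_eq_of_lt (by omega)]
    have hmp : m < p := by
      by_contra hc2; push_neg at hc2
      have e1 : g m = g (m - p) := by
        show f (j + m) = f (j + (m - p))
        exact ((congrArg f (show (j + (m - p)) + p = j + m by omega)).symm).trans (fper (j + (m - p)))
      have e2 : f m = f (m - p) :=
        ((congrArg f (show (m - p) + p = m by omega)).symm).trans (fper (m - p))
      exact hdir.ne (by rw [e1, e2]; exact hag _ (by omega))
    set s := p - j with hs
    have hjs : j + s = p := by omega
    have hs1 : 1 ≤ s := by omega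
    rcases lt_or_ge m s with hms | hms
    · -- m < s : contradict Lyndon of e at shift j
      have key : altLt (shiftSeq e j) e := by
        refine altLt_iff.mpr ⟨m, ?_, ?_⟩
        · intro i hi
          show e (j + i) = e i
          have h1 : g i = f i := hag i hi
          rw [gval1 i (by omega)] at h1
          rw [fval i (by omega)] at h1
          exact h1
        · exact dir_congr Iff.rfl (gval1 m (by omega)) (fval m (by omega)) hdir
      rcases he j with heq | h'
      · exact hpe (peri_of_shift_eq hj1 heq)
      · exact altLt_asymm key h'
    · have dag : ∀ i, i < s → e (j + i) = e i := by
        intro i hi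
        have h1 : g i = f i := hag i (by omega)
        rw [gval1 i (by omega)] at h1
        rw [fval i (by omega)] at h1
        exact h1
      rcases Nat.even_or_odd s with hse | hso
      · -- s even : contradict Lyndon of d at shift j
        have hs2 : 2 ≤ s := by obtain ⟨t, ht⟩ := hse; omega
        have hjk : j ≤ k := by omega
        set i0 := k - j with hi0
        have hji0 : j + i0 = k := by omega
        have hi0s : i0 < s := by omega
        have hi0k : i0 < k := by omega
        have hje : Even j := by
          have hj_eq : j = p - s := by omega
          rw [hj_eq, Nat.even_sub (by omega : s ≤ p)]
          exact iff_of_true hpe2 hse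
        have h1 : d i0 = e k := by
          rw [← hji0, dag i0 hi0s, hkag i0 hi0k, ← dag i0 hi0s]
        have hAg : Agree d (shiftSeq d j) i0 := by
          intro i hi
          show d i = d (j + i)
          rw [hkag i (by omega), ← dag i (by omega), ← hkag (j + i) (by omega)]
        have hne0 : d i0 ≠ (shiftSeq d j) i0 := by
          show d i0 ≠ d (j + i0)
          rw [h1, hji0]
          exact fun hh => hkdir.ne hh.symm
        rcases hd j with heq | h'
        · exact hpd (peri_of_shift_eq hj1 heq)
        · obtain ⟨w, hw1, hw2⟩ := altLt_iff.mp h'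
          have hwi : w = i0 := agree_ne_unique hw1 hw2.ne hAg hne0
          subst hwi
          have hpar : Even i0 ↔ Even k := by
            rw [hi0, Nat.even_sub hjk]; simp [hje]
          have hcontra : Dir e d k := dir_congr hpar h1 (by show d (j + i0) = d k; rw [hji0]) hw2
          exact dir_asymm hkdir hcontra
      · -- s odd : contradict Lyndon of e at shift s
        set ν := m - s with hν
        have key : altLt (shiftSeq e s) e := by
          refine altLt_iff.mpr ⟨ν, ?_, ?_⟩
          · intro i hi
            show e (s + i) = e i
            have h1 : g (s + i) = f (s + i) := hag _ (by omega)
            rw [gval2 (s + i) (by omega) (by omega)] at h1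
            rw [show j + (s + i) - p = i by omega] at h1
            rw [fval (s + i) (by omega)] at h1
            exact h1.symm
          · refine dir_flip ?_ ?_ ?_ hdir
            · have h1 : Even ν ↔ ¬ Even m := by
                rw [hν, Nat.even_sub hms]
                simp [Nat.not_even_iff_odd.mpr hso]
              rw [h1, not_not]
            · have := gval2 m (by omega) (by omega)
              rw [show j + m - p = ν by omega] at this
              exact this
            · have h2 : f m = e m := fval m hmp
              rw [h2]
              show e m = e (s + ν)
              exact congrArg e (by omega)
        rcases he s with heq | h'
        · exact hpe (peri_of_shift_eq hs1 heq)
        · exact altLt_asymm key h'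
  exact ⟨f, hlyn, ⟨p, hp0, fper⟩, hdf, hfe, f0⟩


lemma finite_bdd (n N : ℕ) : {w : List ℕ | w.length = n ∧ ∀ a ∈ w, a ≤ N}.Finite := by
  classical
  have hsub : {w : List ℕ | w.length = n ∧ ∀ a ∈ w, a ≤ N} ⊆
      Set.range (fun v : Fin n → Fin (N + 1) => List.ofFn (fun i => (v i : ℕ))) := by
    rintro w ⟨hl, hb⟩
    subst hl
    refine ⟨fun i => ⟨w.get i, Nat.lt_succ_of_le (hb _ (List.get_mem w i))⟩, ?_⟩
    show List.ofFn (fun i => w.get i) = w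
    exact List.ofFn_get w
  exact (Set.finite_range _).subset hsub

lemma lang_letter_le {d : ℕ → ℕ} {w : List ℕ} (h : w ∈ LyndonLang d) : ∀ a ∈ w, a ≤ d 0 := by
  obtain ⟨x, ⟨hxb, _⟩, ⟨k, hw⟩⟩ := h
  intro a ha
  rw [hw] at ha
  simp only [List.mem_map, List.mem_range] at ha
  obtain ⟨i, _, rfl⟩ := ha
  exact hxb _

lemma log_nat_mono {a b : ℕ} (h : a ≤ b) : Real.log a ≤ Real.log b := by
  rcases Nat.eq_zero_or_pos a with rfl | ha
  · rcases Nat.eq_zero_or_pos b with rfl | hb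
    · exact le_refl _
    · simp only [Nat.cast_zero, Real.log_zero]
      exact Real.log_natCast_nonneg b
  · exact Real.log_le_log (by exact_mod_cast ha) (by exact_mod_cast h)

lemma div_mono_n {a b : ℝ} (h : a ≤ b) (n : ℕ) : a / n ≤ b / n :=
  div_le_div_of_nonneg_right h (Nat.cast_nonneg n)

lemma entropy_between {β : ℝ} {d e f : ℕ → ℕ}
    (h1 : ∀ n, Hword e n ≤ Hword f n) (h2 : ∀ n, Hword f n ≤ Hword d n)
    (hdE : EntropyIs d (Real.log β)) (heE : EntropyIs e (Real.log β)) :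
    EntropyIs f (Real.log β) := by
  refine tendsto_of_tendsto_of_tendsto_of_le_of_le heE hdE ?_ ?_
  · exact fun n => div_mono_n (log_nat_mono (h1 n)) n
  · exact fun n => div_mono_n (log_nat_mono (h2 n)) n

lemma main_case {β : ℝ} {d e : ℕ → ℕ} (hd : IsAltLyndon d) (he : IsAltLyndon e)
    (hpd : ¬ Peri d) (hpe : ¬ Peri e) (hlt : altLt d e)
    (hdE : EntropyIs d (Real.log β)) (heE : EntropyIs e (Real.log β)) :
    ∃ f : ℕ → ℕ, IsAltLyndon f ∧ Peri f ∧ EntropyIs f (Real.log β) := by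
  obtain ⟨f, hfl, hfp, hdf, hfe, hf0⟩ := exists_between hd he hpd hpe hlt
  have he0d0 : e 0 ≤ d 0 := by
    obtain ⟨k, hkag, hkdir⟩ := altLt_iff.mp hlt
    rcases Nat.eq_zero_or_pos k with rfl | hk
    · unfold Dir at hkdir; rw [if_pos Even.zero] at hkdir; exact hkdir.le
    · exact (hkag 0 hk).symm.le
  have hsysEF : LyndonSystem e ⊆ LyndonSystem f := by
    rintro x ⟨hxb, hxs⟩
    exact ⟨fun i => (hxb i).trans_eq hf0.symm, fun k2 => altLe_trans (Or.inr hfe) (hxs k2)⟩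
  have hsysFD : LyndonSystem f ⊆ LyndonSystem d := by
    rintro x ⟨hxb, hxs⟩
    exact ⟨fun i => ((hxb i).trans_eq hf0).trans he0d0, fun k2 => altLe_trans (Or.inr hdf) (hxs k2)⟩
  have hlangEF : LyndonLang e ⊆ LyndonLang f := by
    rintro w ⟨x, hx, hfac⟩; exact ⟨x, hsysEF hx, hfac⟩
  have hlangFD : LyndonLang f ⊆ LyndonLang d := by
    rintro w ⟨x, hx, hfac⟩; exact ⟨x, hsysFD hx, hfac⟩
  have hfinD : ∀ n, {w : List ℕ | w ∈ LyndonLang d ∧ w.length = n}.Finite := fun n =>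
    (finite_bdd n (d 0)).subset (fun w hw => ⟨hw.2, lang_letter_le hw.1⟩)
  have hfinF : ∀ n, {w : List ℕ | w ∈ LyndonLang f ∧ w.length = n}.Finite := fun n =>
    (hfinD n).subset (fun w hw => ⟨hlangFD hw.1, hw.2⟩)
  have h1 : ∀ n, Hword e n ≤ Hword f n := fun n =>
    Set.ncard_le_ncard (fun w hw => ⟨hlangEF hw.1, hw.2⟩) (hfinF n)
  have h2 : ∀ n, Hword f n ≤ Hword d n := fun n =>
    Set.ncard_le_ncard (fun w hw => ⟨hlangFD hw.1, hw.2⟩) (hfinD n)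
  exact ⟨f, hfl, hfp, entropy_between h1 h2 hdE heE⟩

end AltAux

/-- Proposition 9: if `β ≥ 1` is associated to two distinct alternate Lyndon words,
then some periodic (weak) alternate Lyndon word is associated to `β`. -/

theorem stmt17 (β : ℝ) (hβ : 1 ≤ β) (d e : ℕ → ℕ)
    (hd : IsAltLyndon d) (he : IsAltLyndon e) (hne : d ≠ e)
    (hdE : EntropyIs d (Real.log β)) (heE : EntropyIs e (Real.log β)) :
    ∃ f : ℕ → ℕ, IsAltLyndon f ∧ (∃ p : ℕ, 1 ≤ p ∧ ∀ i, f (i + p) = f i) ∧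
      EntropyIs f (Real.log β) := by
  by_cases hPd : AltAux.Peri d
  · exact ⟨d, hd, hPd, hdE⟩
  by_cases hPe : AltAux.Peri e
  · exact ⟨e, he, hPe, heE⟩
  rcases AltAux.altLt_total hne with hlt | hlt
  · exact AltAux.main_case hd he hPd hPe hlt hdE heE
  · exact AltAux.main_case he hd hPe hPd hlt heE hdE
end
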